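/- For all integers m ≥ 0 and i ≥ 1 and for every real p ∈ (0,1], the expectation of the reciprocal rising factorial of a Binomial(m,p) random variable satisfies Σ_{k=0}^{m} (m choose k)·p^k·(1−p)^{m−k}·(k!)/((k+i)!) ≤ 1/(p^i·(m+1)(m+2)⋯(m+i)). -/

import Mathlib

open Finset

lemma nat_choose_key (m i k : ℕ) (hk : k ≤ m) :
    m.choose k * k.factorial * (m + i).factorial
      = (m + i).choose (k + i) * (k + i).factorial * m.factorial := by
  have h1 : m.choose k * k.factorial * (m - k).factorial = m.factorial :=
    Nat.choose_mul_factorial_mul_factorial hk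
  have hk' : k + i ≤ m + i := by omega
  have h2 : (m + i).choose (k + i) * (k + i).factorial * (m + i - (k + i)).factorial
      = (m + i).factorial := Nat.choose_mul_factorial_mul_factorial hk'
  have hmk : m + i - (k + i) = m - k := by omega
  rw [hmk] at h2
  apply Nat.eq_of_mul_eq_mul_right (Nat.factorial_pos (m - k))
  calc m.choose k * k.factorial * (m + i).factorial * (m - k).factorial
      = (m.choose k * k.factorial * (m - k).factorial) * (m + i).factorial := by ring
    _ = m.factorial * (m + i).factorial := by rw [h1]
    _ = ((m + i).choose (k + i) * (k + i).factorial * (m - k).factorial) * m.factorial := by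
        rw [h2]; ring
    _ = (m + i).choose (k + i) * (k + i).factorial * m.factorial * (m - k).factorial := by ring

lemma prod_key (m i : ℕ) :
    (m.factorial : ℝ) * ∏ j ∈ Finset.range i, ((m : ℝ) + (j : ℝ) + 1)
      = ((m + i).factorial : ℝ) := by
  induction i with
  | zero => simp
  | succ n ih =>
      rw [Finset.prod_range_succ, ← mul_assoc, ih]
      have : m + (n + 1) = (m + n) + 1 := by omega
      rw [this, Nat.factorial_succ]
      push_cast
      ring

/-- expectation of the reciprocal rising factorial of a Binomial(m, p)
random variable is at most 1 / (pⁱ (m+1)(m+2)⋯(m+i)). -/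
theorem binomial_reciprocal_rising_factorial_expectation (m i : ℕ) (hi : 1 ≤ i)
    (p : ℝ) (hp : p ∈ Set.Ioc (0 : ℝ) 1) :
    ∑ k ∈ Finset.range (m + 1),
        (m.choose k : ℝ) * p ^ k * (1 - p) ^ (m - k) * (k.factorial : ℝ) /
          ((k + i).factorial : ℝ)
      ≤ 1 / (p ^ i * ∏ j ∈ Finset.range i, ((m : ℝ) + (j : ℝ) + 1)) := by
  obtain ⟨hp0, hp1⟩ := hp
  have hq : (0 : ℝ) ≤ 1 - p := by linarith
  have hP : (0 : ℝ) < ∏ j ∈ Finset.range i, ((m : ℝ) + (j : ℝ) + 1) := by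
    apply Finset.prod_pos; intro j _; positivity
  have hD : (0 : ℝ) < p ^ i * ∏ j ∈ Finset.range i, ((m : ℝ) + (j : ℝ) + 1) := by
    positivity
  rw [le_div_iff₀ hD, Finset.sum_mul]
  -- rewrite each term
  have key : ∀ k ∈ Finset.range (m + 1),
      (m.choose k : ℝ) * p ^ k * (1 - p) ^ (m - k) * (k.factorial : ℝ) /
          ((k + i).factorial : ℝ) * (p ^ i * ∏ j ∈ Finset.range i, ((m : ℝ) + (j : ℝ) + 1))
        = ((m + i).choose (i + k) : ℝ) * p ^ (i + k) * (1 - p) ^ (m + i - (i + k)) := by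
    intro k hk
    have hk' : k ≤ m := by simpa [Nat.lt_succ_iff] using hk
    have hfm : (m.factorial : ℝ) ≠ 0 := by positivity
    have hfk : ((k + i).factorial : ℝ) ≠ 0 := by positivity
    have hprod := prod_key m i
    have hnat := nat_choose_key m i k hk'
    have hnatR : (m.choose k : ℝ) * k.factorial * (m + i).factorial
        = ((m + i).choose (k + i) : ℝ) * (k + i).factorial * m.factorial := by
      exact_mod_cast congrArg (Nat.cast : ℕ → ℝ) hnat
    have hik : i + k = k + i := by omega
    rw [hik, show m + i - (k + i) = m - k from by omega, pow_add]
    have hPeq : (∏ j ∈ Finset.range i, ((m : ℝ) + (j : ℝ) + 1))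
        = ((m + i).factorial : ℝ) / m.factorial := by
      rw [eq_div_iff hfm, mul_comm]; exact hprod
    rw [hPeq]
    field_simp
    linear_combination ((1 - p) ^ (m - k)) * hnatR
  rw [Finset.sum_congr rfl key]
  -- now bound by the full binomial sum
  have htotal : ∑ j ∈ Finset.range (m + i + 1),
      ((m + i).choose j : ℝ) * p ^ j * (1 - p) ^ (m + i - j) = 1 := by
    have := add_pow p (1 - p) (m + i)
    simp only [add_sub_cancel, one_pow] at this
    have hswap : ∑ j ∈ Finset.range (m + i + 1),
        ((m + i).choose j : ℝ) * p ^ j * (1 - p) ^ (m + i - j)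
        = ∑ j ∈ Finset.range (m + i + 1),
            p ^ j * (1 - p) ^ (m + i - j) * ((m + i).choose j : ℝ) :=
      Finset.sum_congr rfl (fun j _ => by ring)
    rw [hswap]; exact this.symm
  have hsplit : ∑ j ∈ Finset.range (i + (m + 1)),
      ((m + i).choose j : ℝ) * p ^ j * (1 - p) ^ (m + i - j)
      = (∑ j ∈ Finset.range i, ((m + i).choose j : ℝ) * p ^ j * (1 - p) ^ (m + i - j))
        + ∑ k ∈ Finset.range (m + 1),
            ((m + i).choose (i + k) : ℝ) * p ^ (i + k) * (1 - p) ^ (m + i - (i + k)) :=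
    Finset.sum_range_add _ i (m + 1)
  have hrange : i + (m + 1) = m + i + 1 := by omega
  rw [hrange] at hsplit
  have hnonneg : (0 : ℝ) ≤ ∑ j ∈ Finset.range i,
      ((m + i).choose j : ℝ) * p ^ j * (1 - p) ^ (m + i - j) := by
    apply Finset.sum_nonneg; intro j _; positivity
  linarith [htotal, hsplit]
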